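/- arXiv:1910.13256 — 3 statements merged into one kernel-verified Lean document; each statement's English description precedes it below -/
import Mathlib

section
/- For all s ≥ 1 and each node x_m, the s-th derivative of the nodal polynomial satisfies a^{(s)}(x_m) = s a_m L_m^{(s-1)}(x_m), where a(x) = Π_{k=1}^M (x - x_k) and a_m = Π_{k≠m} (x_m - x_k). -/
open Finset

private lemma key_deriv (g : ℝ → ℝ) (hg : ContDiff ℝ ⊤ g) (c : ℝ) :
    ∀ n : ℕ, iteratedDeriv n (fun x => (x - c) * g x) =
      fun x => (x - c) * iteratedDeriv n g x + n * iteratedDeriv (n - 1) g x := by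
  intro n
  induction n with
  | zero => simp [iteratedDeriv_zero]
  | succ n ih =>
    have hG : Differentiable ℝ (iteratedDeriv n g) :=
      hg.differentiable_iteratedDeriv n (by exact_mod_cast lt_top_iff_ne_top.2 (by simp))
    have hH : Differentiable ℝ (iteratedDeriv (n - 1) g) :=
      hg.differentiable_iteratedDeriv (n - 1) (by exact_mod_cast lt_top_iff_ne_top.2 (by simp))
    funext x
    rw [iteratedDeriv_succ, ih]
    have h1 : DifferentiableAt ℝ (fun x : ℝ => (x - c) * iteratedDeriv n g x) x :=
      ((differentiableAt_fun_id.sub_const c).mul (hG x))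
    have h2 : DifferentiableAt ℝ (fun x : ℝ => (n : ℝ) * iteratedDeriv (n - 1) g x) x :=
      (hH x).const_mul _
    rw [deriv_fun_add h1 h2, deriv_fun_mul (differentiableAt_fun_id.sub_const c) (hG x),
      deriv_const_mul _ (hH x)]
    have hsub : deriv (fun x : ℝ => x - c) x = 1 := by
      simp [deriv_sub_const]
    rw [hsub]
    have hGd : deriv (iteratedDeriv n g) x = iteratedDeriv (n + 1) g x := by
      rw [iteratedDeriv_succ]
    rcases Nat.eq_zero_or_pos n with h | h
    · subst h; simp [hGd]; ring
    · have hHd : deriv (iteratedDeriv (n - 1) g) x = iteratedDeriv n g x := by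
        rw [← iteratedDeriv_succ, Nat.sub_add_cancel h]
      rw [hGd, hHd]
      simp only [Nat.add_sub_cancel]
      push_cast
      ring

theorem nodal_poly_higher_deriv_at_node {M : ℕ} (X : Fin M → ℝ) (hX : Function.Injective X)
    (L : Fin M → ℝ → ℝ)
    (hL : ∀ m x, L m x = ∏ k ∈ univ.erase m, (x - X k) / (X m - X k))
    (a : ℝ → ℝ) (ha : ∀ x, a x = ∏ k, (x - X k))
    (am : Fin M → ℝ) (ham : ∀ m, am m = ∏ k ∈ univ.erase m, (X m - X k))
    (m : Fin M) (s : ℕ) (hs : 1 ≤ s) :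
    iteratedDeriv s a (X m) = s * am m * iteratedDeriv (s - 1) (L m) (X m) := by
  have hLc : ContDiff ℝ ⊤ (L m) := by
    have : ContDiff ℝ ⊤ (fun x => ∏ k ∈ univ.erase m, (x - X k) / (X m - X k)) := by
      have hk : ∀ k ∈ univ.erase m, ContDiff ℝ (⊤ : WithTop ℕ∞) (fun x : ℝ => (x - X k) / (X m - X k)) :=
        fun k _ => (contDiff_id.sub contDiff_const).div_const _
      exact contDiff_prod hk
    convert this using 1
    funext x; exact hL m x
  -- a = fun x => am m * ((x - X m) * L m x)
  have hne : ∀ k ∈ univ.erase m, X m - X k ≠ 0 := by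
    intro k hk
    have : k ≠ m := (mem_erase.1 hk).1
    exact sub_ne_zero.2 fun h => this (hX h.symm)
  have ha' : a = fun x => am m * ((x - X m) * L m x) := by
    funext x
    rw [ha, hL, ham, ← mul_prod_erase univ _ (mem_univ m)]
    rw [mul_left_comm, ← prod_mul_distrib]
    congr 1
    apply prod_congr rfl
    intro k hk
    field_simp [hne k hk]
  rw [ha']
  have hmul : ContDiff ℝ ⊤ (fun x => (x - X m) * L m x) :=
    ((contDiff_id.sub contDiff_const).mul hLc)
  have hc : iteratedDeriv s (fun x => am m * ((x - X m) * L m x)) (X m)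
      = am m * iteratedDeriv s (fun x => (x - X m) * L m x) (X m) := by
    rw [← iteratedDerivWithin_univ, ← iteratedDerivWithin_univ]
    exact iteratedDerivWithin_const_mul (Set.mem_univ _) uniqueDiffOn_univ _
      (((hmul.of_le le_top).contDiffOn (s := Set.univ)).contDiffWithinAt (Set.mem_univ _))
  rw [hc, key_deriv (L m) hLc (X m) s]
  simp only [sub_self, zero_mul, zero_add]
  ring
end

section
/- Recursion for higher derivatives of Lagrange basis polynomials: for s ≥ 1 and i ≠ m, L_m^{(s)}(x_i) = (s/(x_i - x_m)) [ (a_i/a_m) L_i^{(s-1)}(x_i) - L_m^{(s-1)}(x_i) ], where a_j = Π_{k≠j} (x_j - x_k). -/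
open Finset
open scoped ContDiff

private lemma iD_add {n : ℕ} {f g : ℝ → ℝ} (hf : ContDiff ℝ n f) (hg : ContDiff ℝ n g) (x : ℝ) :
    iteratedDeriv n (fun y => f y + g y) x = iteratedDeriv n f x + iteratedDeriv n g x := by
  simp_rw [← iteratedDerivWithin_univ]
  exact iteratedDerivWithin_add (Set.mem_univ x) uniqueDiffOn_univ
    hf.contDiffWithinAt hg.contDiffWithinAt

private lemma iD_cmul {n : ℕ} {f : ℝ → ℝ} (hf : ContDiff ℝ n f) (c x : ℝ) :
    iteratedDeriv n (fun y => c * f y) x = c * iteratedDeriv n f x := by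
  simp_rw [← iteratedDerivWithin_univ]
  exact iteratedDerivWithin_const_mul (Set.mem_univ x) uniqueDiffOn_univ c hf.contDiffWithinAt

private lemma key (c : ℝ) : ∀ n : ℕ, ∀ f : ℝ → ℝ, ContDiff ℝ ∞ f → ∀ x : ℝ,
    iteratedDeriv (n + 1) (fun y => (y - c) * f y) x
      = (x - c) * iteratedDeriv (n + 1) f x + (n + 1) * iteratedDeriv n f x := by
  intro n
  induction n with
  | zero =>
    intro f hf x
    rw [iteratedDeriv_one, iteratedDeriv_one, iteratedDeriv_zero]
    rw [deriv_fun_mul (by fun_prop) (hf.differentiable (by simp) x)]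
    have : deriv (fun y => y - c) x = 1 := by
      simp [deriv_sub differentiableAt_id (differentiableAt_const c)]
    rw [this]; ring
  | succ n ih =>
    intro f hf x
    have hdf : ContDiff ℝ ∞ (deriv f) := (contDiff_infty_iff_deriv.mp hf).2
    have hder : deriv (fun y => (y - c) * f y) = fun y => f y + (y - c) * deriv f y := by
      funext y
      rw [deriv_fun_mul (by fun_prop) (hf.differentiable (by simp) y)]
      have : deriv (fun z => z - c) y = 1 := by
        simp [deriv_sub differentiableAt_id (differentiableAt_const c)]
      rw [this]; ring
    rw [iteratedDeriv_succ', hder]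
    have h1 : ContDiff ℝ (n + 1 : ℕ) f := hf.of_le (by exact_mod_cast le_top)
    have h2 : ContDiff ℝ (n + 1 : ℕ) (fun y => (y - c) * deriv f y) :=
      ((contDiff_id.sub contDiff_const).mul hdf).of_le (by exact_mod_cast le_top)
    rw [iD_add h1 h2 x, ih (deriv f) hdf x, ← iteratedDeriv_succ', ← iteratedDeriv_succ']
    push_cast; ring

theorem lagrange_higher_deriv_recursion {M : ℕ} (X : Fin M → ℝ) (hX : Function.Injective X)
    (L : Fin M → ℝ → ℝ)
    (hL : ∀ m x, L m x = ∏ k ∈ univ.erase m, (x - X k) / (X m - X k))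
    (a : Fin M → ℝ) (ha : ∀ j, a j = ∏ k ∈ univ.erase j, (X j - X k))
    (s : ℕ) (hs : 1 ≤ s) (i m : Fin M) (him : i ≠ m) :
    iteratedDeriv s (L m) (X i)
      = s / (X i - X m)
        * ((a i / a m) * iteratedDeriv (s - 1) (L i) (X i)
            - iteratedDeriv (s - 1) (L m) (X i)) := by
  -- nonvanishing of a
  have hane : ∀ j, a j ≠ 0 := by
    intro j
    rw [ha j]
    exact Finset.prod_ne_zero_iff.mpr fun k hk =>
      sub_ne_zero.mpr fun h => (Finset.mem_erase.mp hk).1 (hX h.symm)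
  have hxim : X i - X m ≠ 0 := sub_ne_zero.mpr fun h => him (hX h)
  -- smoothness of L
  have hLfun : ∀ j, L j = fun x => ∏ k ∈ univ.erase j, (x - X k) / (X j - X k) := fun j =>
    funext (hL j)
  have hLc : ∀ j, ContDiff ℝ ∞ (L j) := by
    intro j
    rw [hLfun j]
    exact contDiff_prod fun k _ => (contDiff_id.sub contDiff_const).div_const _
  -- the fundamental polynomial identity
  have hW : ∀ j, ∀ x : ℝ, (x - X j) * L j x = (∏ k : Fin M, (x - X k)) / a j := by
    intro j x
    rw [hL j, ha j, Finset.prod_div_distrib, ← mul_div_assoc,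
      Finset.mul_prod_erase univ (fun k => x - X k) (Finset.mem_univ j)]
  have hid : ∀ x : ℝ, (x - X m) * L m x = (a i / a m) * ((x - X i) * L i x) := by
    intro x
    rw [hW m x, hW i x]
    field_simp
    rw [mul_div_mul_right _ _ (hane i)]
  -- rewrite s = t + 1
  obtain ⟨t, rfl⟩ : ∃ t, s = t + 1 := ⟨s - 1, (Nat.succ_pred_eq_of_pos hs).symm⟩
  have hst : t + 1 - 1 = t := rfl
  rw [hst]
  -- differentiate the identity s times at X i
  have hEq : iteratedDeriv (t + 1) (fun x => (x - X m) * L m x) (X i)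
      = iteratedDeriv (t + 1) (fun x => (a i / a m) * ((x - X i) * L i x)) (X i) := by
    congr 1; funext x; exact hid x
  have hG : ContDiff ℝ ∞ (fun x => (x - X i) * L i x) :=
    (contDiff_id.sub contDiff_const).mul (hLc i)
  rw [key (X m) t (L m) (hLc m) (X i),
    iD_cmul (hG.of_le (by exact_mod_cast le_top)) (a i / a m) (X i),
    key (X i) t (L i) (hLc i) (X i)] at hEq
  simp only [sub_self, zero_mul, zero_add] at hEq
  rw [div_mul_eq_mul_div, eq_div_iff hxim]
  push_cast
  linear_combination hEq
end

section
/- The s-th power of the first differentiation matrix agrees with the s-th differentiation matrix when applied to values of any polynomial of degree at most M-1: for p of degree ≤ M-1, (D_1^s f)_i = p^{(s)}(x_i) where f_j = p(x_j); in particular D_1^M applied to such vectors is zero when s = M. -/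
open Finset

theorem poly_iteratedDeriv (s : ℕ) (q : Polynomial ℝ) :
    iteratedDeriv s (fun x => q.eval x) = fun y => (Polynomial.derivative^[s] q).eval y := by
  induction s generalizing q with
  | zero => simp
  | succ s ih =>
    funext y
    rw [iteratedDeriv_succ']
    have h : deriv (fun x => q.eval x) = fun x => q.derivative.eval x :=
      funext fun x => q.deriv
    rw [h, ih q.derivative, Function.iterate_succ_apply]

theorem diff_matrix_powers {M : ℕ} (X : Fin M → ℝ) (hX : Function.Injective X)
    (L : Fin M → ℝ → ℝ)
    (hL : ∀ m x, L m x = ∏ k ∈ univ.erase m, (x - X k) / (X m - X k))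
    (D₁ : Matrix (Fin M) (Fin M) ℝ)
    (hD₁ : ∀ i m, D₁ i m = deriv (L m) (X i))
    (p : Polynomial ℝ) (hp : p.degree ≤ (M - 1 : ℕ)) :
    (∀ s : ℕ, ∀ i : Fin M,
        (D₁ ^ s).mulVec (fun j => p.eval (X j)) i
          = iteratedDeriv s (fun x => p.eval x) (X i))
      ∧ (D₁ ^ M).mulVec (fun j => p.eval (X j)) = 0 := by
  -- L m is evaluation of the Lagrange basis polynomial
  have hLb : ∀ m, L m = fun x => (Lagrange.basis univ X m).eval x := by
    intro m
    funext x
    rw [hL, Lagrange.basis, Polynomial.eval_prod]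
    refine Finset.prod_congr rfl fun k _ => ?_
    simp [Lagrange.basisDivisor, div_eq_inv_mul]
  have hD : ∀ i m, D₁ i m =
      (Polynomial.derivative (Lagrange.basis univ X m)).eval (X i) := by
    intro i m
    rw [hD₁, hLb, (Lagrange.basis univ X m).deriv]
  -- single application of D₁
  have key : ∀ q : Polynomial ℝ, q.degree < (M : ℕ) → ∀ i : Fin M,
      D₁.mulVec (fun j => q.eval (X j)) i = q.derivative.eval (X i) := by
    intro q hq i
    have hint : Lagrange.interpolate univ X (fun j => q.eval (X j)) = q := by
      refine (Lagrange.eq_interpolate (Set.injOn_of_injective hX) ?_).symm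
      simpa using hq
    have h2 := congrArg (fun r => (Polynomial.derivative r).eval (X i)) hint
    simp only [Lagrange.interpolate_apply, map_sum, Polynomial.derivative_C_mul,
      Polynomial.eval_finset_sum, Polynomial.eval_mul, Polynomial.eval_C] at h2
    rw [Matrix.mulVec, dotProduct, ← h2]
    refine Finset.sum_congr rfl fun m _ => ?_
    rw [hD, mul_comm]
  -- powers of D₁
  have pows : ∀ s : ℕ, ∀ q : Polynomial ℝ, q.degree < (M : ℕ) → ∀ i : Fin M,
      (D₁ ^ s).mulVec (fun j => q.eval (X j)) i
        = (Polynomial.derivative^[s] q).eval (X i) := by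
    intro s
    induction s with
    | zero => intro q hq i; simp [Matrix.one_mulVec]
    | succ s ih =>
      intro q hq i
      have hstep : D₁.mulVec (fun j => q.eval (X j))
          = fun j => q.derivative.eval (X j) := funext fun j => key q hq j
      rw [pow_succ, ← Matrix.mulVec_mulVec, hstep,
        ih q.derivative (lt_of_le_of_lt q.degree_derivative_le hq),
        Function.iterate_succ_apply]
  have hdeg : ∀ i : Fin M, p.degree < (M : ℕ) := by
    intro i
    have hM : 1 ≤ M := i.pos
    refine lt_of_le_of_lt hp ?_
    exact_mod_cast Nat.sub_lt hM one_pos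
  constructor
  · intro s i
    rw [pows s p (hdeg i) i, poly_iteratedDeriv]
  · funext i
    rw [Pi.zero_apply, pows M p (hdeg i) i,
      Polynomial.iterate_derivative_eq_zero
        (lt_of_le_of_lt (Polynomial.natDegree_le_iff_degree_le.mpr hp)
          (Nat.sub_lt i.pos one_pos)),
      Polynomial.eval_zero]
end
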